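/- Let p be an odd prime and r ∈ ℤ/pℤ. Then the number of g ∈ GL₂(ℤ/pℤ) with tr(g) = r equals p²(p−1) if r = 0 in ℤ/pℤ, and equals p(p² − p − 1) if r ≠ 0 in ℤ/pℤ. -/

import Mathlib

open Matrix Finset

section aux
variable {p : ℕ} [Fact p.Prime]

lemma sumc' (b t : ZMod p) :
    ∑ c : ZMod p, (if b * c = t then (1:ℤ) else 0)
      = if b = 0 then (if t = 0 then (p:ℤ) else 0) else 1 := by
  rcases eq_or_ne b 0 with hb | hb
  · subst hb
    rcases eq_or_ne t 0 with ht | ht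
    · subst ht; simp [ZMod.card]
    · simp [ht, Ne.symm ht]
  · have h : ∀ c : ZMod p, (b * c = t) ↔ (c = b⁻¹ * t) := by
      intro c
      constructor
      · rintro rfl; field_simp
      · rintro rfl; field_simp
    simp only [h, hb, if_false]
    simp

lemma sumbc' (t : ZMod p) :
    ∑ b : ZMod p, ∑ c : ZMod p, (if b * c = t then (1:ℤ) else 0)
      = if t = 0 then 2*(p:ℤ) - 1 else (p:ℤ) - 1 := by
  simp only [sumc']
  set A : ℤ := if t = 0 then (p:ℤ) else 0 with hA
  have h1 : ∑ b : ZMod p, (if b = 0 then A else 1)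
      = ∑ b : ZMod p, ((if b = 0 then A - 1 else 0) + 1) := by
    apply Finset.sum_congr rfl; intro b _; split <;> ring
  rw [h1, Finset.sum_add_distrib]
  rw [Finset.sum_ite_eq' Finset.univ (0 : ZMod p) (fun _ => A - 1)]
  simp only [Finset.mem_univ, if_true, Finset.sum_const, Finset.card_univ, ZMod.card,
    nsmul_eq_mul, mul_one]
  rcases eq_or_ne t 0 with ht | ht <;> simp [hA, ht] <;> ring

end aux

lemma coe_mkOfDetNeZero' {K : Type*} [Field K] {n : Type*} [DecidableEq n] [Fintype n]
    (A : Matrix n n K) (h : A.det ≠ 0) :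
    ((Matrix.GeneralLinearGroup.mkOfDetNeZero A h : GL n K) : Matrix n n K) = A := rfl

/-- For an odd prime `p` and `r ∈ ℤ/pℤ`, the number of `g ∈ GL₂(ℤ/pℤ)` with
`tr g = r` equals `p²(p-1)` if `r = 0` and `p(p²-p-1)` if `r ≠ 0`. -/
theorem card_GL2_fixed_trace (p : ℕ) [Fact p.Prime] (hp : p ≠ 2) (r : ZMod p) :
    (Nat.card {g : GL (Fin 2) (ZMod p) |
        Matrix.trace (g : Matrix (Fin 2) (Fin 2) (ZMod p)) = r} : ℤ)
      = if r = 0 then (p : ℤ) ^ 2 * (p - 1) else p * ((p : ℤ) ^ 2 - p - 1) := by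
  classical
  -- Step 1: bijection with triples (a,b,c) with a(r-a) - bc ≠ 0
  have e : {g : GL (Fin 2) (ZMod p) |
        Matrix.trace (g : Matrix (Fin 2) (Fin 2) (ZMod p)) = r} ≃
      {x : ZMod p × ZMod p × ZMod p // x.1 * (r - x.1) - x.2.1 * x.2.2 ≠ 0} :=
  { toFun := fun g => ⟨(g.1.1 0 0, g.1.1 0 1, g.1.1 1 0), by
      have hg := g.2
      simp only [Set.mem_setOf_eq, Matrix.trace_fin_two] at hg
      have h11 : g.1.1 1 1 = r - g.1.1 0 0 := eq_sub_of_add_eq' hg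
      have hd : (g.1.1).det ≠ 0 := by
        have := (Matrix.isUnit_iff_isUnit_det _).mp g.1.isUnit
        exact this.ne_zero
      rw [Matrix.det_fin_two, h11] at hd
      simpa using hd⟩
    invFun := fun x => ⟨Matrix.GeneralLinearGroup.mkOfDetNeZero
        !![x.1.1, x.1.2.1; x.1.2.2, r - x.1.1]
        (by rw [Matrix.det_fin_two_of]; simpa using x.2), by
      show Matrix.trace _ = r
      rw [coe_mkOfDetNeZero', Matrix.trace_fin_two]
      simp⟩
    left_inv := fun g => by
      have hg := g.2
      simp only [Set.mem_setOf_eq, Matrix.trace_fin_two] at hg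
      have h11 : g.1.1 1 1 = r - g.1.1 0 0 := eq_sub_of_add_eq' hg
      apply Subtype.ext
      apply Units.ext
      ext i j
      rw [coe_mkOfDetNeZero']
      fin_cases i <;> fin_cases j <;> simp [h11]
    right_inv := fun x => by
      apply Subtype.ext
      simp [coe_mkOfDetNeZero', Prod.ext_iff] }
  rw [Nat.card_congr e, Nat.card_eq_fintype_card, Fintype.card_subtype]
  -- Step 2: express as an integer sum
  have hsum : ((Finset.univ.filter fun x : ZMod p × ZMod p × ZMod p =>
        x.1 * (r - x.1) - x.2.1 * x.2.2 ≠ 0).card : ℤ)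
      = ∑ a : ZMod p, ∑ b : ZMod p, ∑ c : ZMod p,
          (if a * (r - a) - b * c ≠ 0 then (1:ℤ) else 0) := by
    rw [Finset.card_filter]
    push_cast
    rw [Fintype.sum_prod_type]
    congr 1
    ext a
    rw [Fintype.sum_prod_type]
  rw [hsum]
  -- Step 3: evaluate inner sums
  have inner : ∀ a : ZMod p, ∑ b : ZMod p, ∑ c : ZMod p,
      (if a * (r - a) - b * c ≠ 0 then (1:ℤ) else 0)
      = (p:ℤ)^2 - (if a * (r - a) = 0 then 2*(p:ℤ) - 1 else (p:ℤ) - 1) := by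
    intro a
    have step : ∀ b c : ZMod p, (if a * (r - a) - b * c ≠ 0 then (1:ℤ) else 0)
        = 1 - (if b * c = a * (r - a) then (1:ℤ) else 0) := by
      intro b c
      rcases eq_or_ne (b * c) (a * (r - a)) with h | h
      · simp [h]
      · rw [if_pos, if_neg h]; · ring
        · rw [sub_ne_zero]; exact fun hh => h hh.symm
    simp only [step]
    rw [Finset.sum_congr rfl (fun b _ => Finset.sum_sub_distrib _ _), Finset.sum_sub_distrib,
      sumbc' (a * (r - a))]
    simp [ZMod.card, sq]
  rw [Finset.sum_congr rfl (fun a _ => inner a)]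
  -- Step 4: final sum over a
  rcases eq_or_ne r 0 with hr | hr
  · subst hr
    have h0 : ∀ a : ZMod p, ((p:ℤ)^2 - (if a * (0 - a) = 0 then 2*(p:ℤ) - 1 else (p:ℤ) - 1))
        = (if a = 0 then -(p:ℤ) else 0) + ((p:ℤ)^2 - (p:ℤ) + 1) := by
      intro a
      rcases eq_or_ne a 0 with rfl | ha
      · simp; ring
      · rw [if_neg, if_neg ha]; · ring
        · simpa [neg_eq_zero] using fun h => ha (by simpa using h)
    rw [Finset.sum_congr rfl (fun a _ => h0 a), Finset.sum_add_distrib,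
      Finset.sum_ite_eq' Finset.univ (0 : ZMod p) (fun _ => -(p:ℤ))]
    simp only [Finset.mem_univ, if_true, Finset.sum_const, Finset.card_univ, ZMod.card,
      nsmul_eq_mul, if_pos rfl]
    ring
  · have h0 : ∀ a : ZMod p, ((p:ℤ)^2 - (if a * (r - a) = 0 then 2*(p:ℤ) - 1 else (p:ℤ) - 1))
        = (if a = 0 then -(p:ℤ) else 0) + (if a = r then -(p:ℤ) else 0)
            + ((p:ℤ)^2 - (p:ℤ) + 1) := by
      intro a
      have hc : a * (r - a) = 0 ↔ (a = 0 ∨ a = r) := by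
        rw [mul_eq_zero, sub_eq_zero]
        constructor
        · rintro (h | h); exacts [Or.inl h, Or.inr h.symm]
        · rintro (h | h); exacts [Or.inl h, Or.inr h.symm]
      rcases eq_or_ne a 0 with rfl | ha
      · rw [if_pos (hc.mpr (Or.inl rfl)), if_pos rfl, if_neg (Ne.symm hr)]; ring
      · rcases eq_or_ne a r with rfl | har
        · rw [if_pos (hc.mpr (Or.inr rfl)), if_neg ha, if_pos rfl]; ring
        · rw [if_neg, if_neg ha, if_neg har]; · ring
          · rw [hc]; rintro (h | h); exacts [ha h, har h]
    rw [Finset.sum_congr rfl (fun a _ => h0 a)]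
    rw [Finset.sum_add_distrib, Finset.sum_add_distrib,
      Finset.sum_ite_eq' Finset.univ (0 : ZMod p) (fun _ => -(p:ℤ)),
      Finset.sum_ite_eq' Finset.univ r (fun _ => -(p:ℤ))]
    simp only [Finset.mem_univ, if_true, Finset.sum_const, Finset.card_univ, ZMod.card,
      nsmul_eq_mul, if_neg hr]
    ring
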